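/- arXiv:0704.1358 — 7 statements merged into one kernel-verified Lean document; each statement's English description precedes it below -/
import Mathlib

section
/- There exists a distance-increasing mapping from Z_3^3 to S_5, i.e., an injective map F : Z_3^3 → S_5 such that for all distinct x, y ∈ Z_3^3, d_H(F(x), F(y)) > d_H(x, y), where permutations are compared as 5-tuples of values. Moreover F can be chosen so that F(x)_5 ∉ {1, 2} for all x. -/
def tblF : Fin 3 → Fin 3 → Fin 3 → (Fin 5 → Fin 5)
  | 0, 0, 0 => ![0, 4, 3, 1, 2]
  | 0, 0, 1 => ![3, 1, 4, 0, 2]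
  | 0, 0, 2 => ![0, 3, 4, 1, 2]
  | 0, 1, 0 => ![2, 0, 1, 3, 4]
  | 0, 1, 1 => ![3, 4, 1, 0, 2]
  | 0, 1, 2 => ![4, 3, 0, 1, 2]
  | 0, 2, 0 => ![1, 4, 0, 3, 2]
  | 0, 2, 1 => ![1, 0, 3, 4, 2]
  | 0, 2, 2 => ![1, 3, 0, 4, 2]
  | 1, 0, 0 => ![0, 1, 2, 4, 3]
  | 1, 0, 1 => ![2, 1, 4, 0, 3]
  | 1, 0, 2 => ![0, 2, 1, 4, 3]
  | 1, 1, 0 => ![2, 4, 0, 1, 3]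
  | 1, 1, 1 => ![2, 4, 1, 0, 3]
  | 1, 1, 2 => ![4, 0, 2, 1, 3]
  | 1, 2, 0 => ![1, 0, 4, 2, 3]
  | 1, 2, 1 => ![1, 4, 2, 0, 3]
  | 1, 2, 2 => ![4, 1, 0, 2, 3]
  | 2, 0, 0 => ![0, 1, 2, 3, 4]
  | 2, 0, 1 => ![3, 1, 2, 0, 4]
  | 2, 0, 2 => ![0, 1, 3, 2, 4]
  | 2, 1, 0 => ![3, 0, 1, 2, 4]
  | 2, 1, 1 => ![3, 2, 0, 1, 4]
  | 2, 1, 2 => ![0, 3, 1, 2, 4]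
  | 2, 2, 0 => ![1, 2, 3, 0, 4]
  | 2, 2, 1 => ![1, 3, 2, 0, 4]
  | 2, 2, 2 => ![1, 3, 0, 2, 4]

def fF (x : Fin 3 → Fin 3) : Fin 5 → Fin 5 := tblF (x 0) (x 1) (x 2)

lemma fF_bij : ∀ x, Function.Bijective (fF x) := by decide

theorem stmt_6 :
    ∃ F : (Fin 3 → Fin 3) → Equiv.Perm (Fin 5),
      Function.Injective F ∧
      (∀ x y : Fin 3 → Fin 3, x ≠ y → hammingDist x y < hammingDist ⇑(F x) ⇑(F y)) ∧
      (∀ x, ((F x 4 : Fin 5) : ℕ) + 1 ≠ 1 ∧ ((F x 4 : Fin 5) : ℕ) + 1 ≠ 2) := by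
  refine ⟨fun x => Equiv.ofBijective (fF x) (fF_bij x), ?_, ?_, ?_⟩
  · intro x y h
    have h2 : fF x = fF y := congrArg (fun e => (e : Equiv.Perm (Fin 5)).toFun) h
    revert h2
    revert x y
    decide
  · intro x y hxy
    have : hammingDist x y < hammingDist (fF x) (fF y) := by revert hxy; revert x y; decide
    exact this
  · intro x
    have : (((fF x) 4 : Fin 5) : ℕ) + 1 ≠ 1 ∧ (((fF x) 4 : Fin 5) : ℕ) + 1 ≠ 2 := by
      revert x; decide
    exact this
end

section
/- There exists an injective map R : Z_3^3 → S_5 such that: (i) for every x ∈ Z_3^3, 1 ∈ {R(x)_1, R(x)_2, R(x)_3}; (ii) for every x, R(x)_5 ≠ 5; (iii) for every distinct x, y ∈ Z_3^3, the Hamming distance between the 3-tuples obtained from R(x) and R(y) by deleting coordinates 4 and 5 is at least d_H(x, y). -/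
def Tf : Fin 3 → Fin 3 → Fin 3 → (Fin 5 → Fin 5) :=
![![![![2, 1, 0, 4, 3], ![2, 3, 0, 4, 1], ![1, 2, 0, 4, 3]],
    ![![3, 1, 0, 4, 2], ![3, 4, 0, 1, 2], ![1, 4, 0, 2, 3]],
    ![![4, 1, 0, 2, 3], ![4, 3, 0, 1, 2], ![4, 2, 0, 1, 3]]],
  ![![![0, 1, 4, 2, 3], ![0, 3, 4, 1, 2], ![0, 2, 4, 1, 3]],
    ![![0, 1, 2, 4, 3], ![0, 4, 1, 2, 3], ![0, 4, 2, 1, 3]],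
    ![![0, 1, 3, 4, 2], ![0, 3, 1, 4, 2], ![0, 2, 3, 4, 1]]],
  ![![![2, 0, 4, 1, 3], ![2, 0, 1, 4, 3], ![1, 0, 4, 2, 3]],
    ![![3, 0, 2, 4, 1], ![3, 0, 1, 4, 2], ![1, 0, 2, 4, 3]],
    ![![4, 0, 3, 1, 2], ![4, 0, 1, 2, 3], ![1, 0, 3, 4, 2]]]]

def Tb : Fin 3 → Fin 3 → Fin 3 → (Fin 5 → Fin 5) :=
![![![![2, 1, 0, 4, 3], ![2, 4, 0, 1, 3], ![2, 0, 1, 4, 3]],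
    ![![2, 1, 4, 0, 3], ![2, 3, 4, 0, 1], ![2, 0, 3, 4, 1]],
    ![![2, 1, 3, 4, 0], ![2, 3, 4, 1, 0], ![2, 3, 1, 4, 0]]],
  ![![![0, 1, 3, 4, 2], ![0, 3, 4, 1, 2], ![0, 3, 1, 4, 2]],
    ![![0, 1, 2, 4, 3], ![0, 2, 3, 4, 1], ![0, 3, 2, 4, 1]],
    ![![0, 1, 4, 2, 3], ![0, 2, 4, 1, 3], ![0, 4, 1, 2, 3]]],
  ![![![1, 3, 0, 4, 2], ![1, 2, 0, 4, 3], ![1, 0, 3, 4, 2]],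
    ![![1, 4, 2, 0, 3], ![1, 2, 4, 0, 3], ![1, 0, 2, 4, 3]],
    ![![1, 3, 4, 2, 0], ![1, 2, 3, 4, 0], ![1, 0, 4, 2, 3]]]]

lemma T_left : ∀ i j k : Fin 3, ∀ a : Fin 5, Tb i j k (Tf i j k a) = a := by decide

lemma T_right : ∀ i j k : Fin 3, ∀ a : Fin 5, Tf i j k (Tb i j k a) = a := by decide

def Rmap (x : Fin 3 → Fin 3) : Equiv.Perm (Fin 5) where
  toFun := Tf (x 0) (x 1) (x 2)
  invFun := Tb (x 0) (x 1) (x 2)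
  left_inv a := T_left (x 0) (x 1) (x 2) a
  right_inv a := T_right (x 0) (x 1) (x 2) a

lemma Rmap_apply (x : Fin 3 → Fin 3) (i : Fin 5) : Rmap x i = Tf (x 0) (x 1) (x 2) i := rfl

lemma funext3 (x y : Fin 3 → Fin 3) (h0 : x 0 = y 0) (h1 : x 1 = y 1) (h2 : x 2 = y 2) :
    x = y := by
  funext i
  fin_cases i <;> assumption

lemma Tf_inj : ∀ i j k i' j' k' : Fin 3,
    (∀ a : Fin 5, Tf i j k a = Tf i' j' k' a) → i = i' ∧ j = j' ∧ k = k' := by decide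

theorem stmt_7 :
    ∃ R : (Fin 3 → Fin 3) → Equiv.Perm (Fin 5),
      Function.Injective R ∧
      (∀ x, ∃ i : Fin 5, (i : ℕ) < 3 ∧ ((R x i : Fin 5) : ℕ) + 1 = 1) ∧
      (∀ x, ((R x 4 : Fin 5) : ℕ) + 1 ≠ 5) ∧
      (∀ x y : Fin 3 → Fin 3, x ≠ y →
        hammingDist x y ≤
          (Finset.univ.filter fun i : Fin 5 => (i : ℕ) < 3 ∧ R x i ≠ R y i).card) := by
  refine ⟨Rmap, ?_, ?_, ?_, ?_⟩
  · intro x y h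
    have h' : ∀ a : Fin 5, Tf (x 0) (x 1) (x 2) a = Tf (y 0) (y 1) (y 2) a := by
      intro a
      have := congrArg (fun e : Equiv.Perm (Fin 5) => e a) h
      simpa [Rmap] using this
    obtain ⟨h0, h1, h2⟩ := Tf_inj _ _ _ _ _ _ h'
    exact funext3 x y h0 h1 h2
  · intro x
    have : ∀ i j k : Fin 3, ∃ a : Fin 5, (a : ℕ) < 3 ∧ ((Tf i j k a : Fin 5) : ℕ) + 1 = 1 := by
      decide
    obtain ⟨a, ha, ha'⟩ := this (x 0) (x 1) (x 2)
    exact ⟨a, ha, ha'⟩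
  · intro x
    have : ∀ i j k : Fin 3, ((Tf i j k 4 : Fin 5) : ℕ) + 1 ≠ 5 := by decide
    exact this (x 0) (x 1) (x 2)
  · intro x y hxy
    have hx : x = ![x 0, x 1, x 2] := by
      funext i; fin_cases i <;> rfl
    have hy : y = ![y 0, y 1, y 2] := by
      funext i; fin_cases i <;> rfl
    have key : ∀ i j k i' j' k' : Fin 3, (i, j, k) ≠ (i', j', k') →
        hammingDist ![i, j, k] ![i', j', k'] ≤
          (Finset.univ.filter fun a : Fin 5 =>
            (a : ℕ) < 3 ∧ Tf i j k a ≠ Tf i' j' k' a).card := by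
      decide
    have hne : (x 0, x 1, x 2) ≠ (y 0, y 1, y 2) := by
      intro h
      exact hxy (funext3 x y (congrArg Prod.fst h)
        (congrArg Prod.fst (congrArg Prod.snd h)) (congrArg Prod.snd (congrArg Prod.snd h)))
    calc hammingDist x y = hammingDist ![x 0, x 1, x 2] ![y 0, y 1, y 2] := by
            rw [← hx, ← hy]
      _ ≤ (Finset.univ.filter fun a : Fin 5 =>
            (a : ℕ) < 3 ∧ Tf (x 0) (x 1) (x 2) a ≠ Tf (y 0) (y 1) (y 2) a).card :=
            key _ _ _ _ _ _ hne
      _ = (Finset.univ.filter fun a : Fin 5 =>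
            (a : ℕ) < 3 ∧ Rmap x a ≠ Rmap y a).card := rfl
end

section
/- There exists an injective map S : Z_3^3 → S_5 such that: (i) for every x ∈ Z_3^3, 2 ∈ {S(x)_1, S(x)_2, S(x)_3}; (ii) for every x, S(x)_5 ≠ 1; (iii) for every distinct x, y ∈ Z_3^3, the Hamming distance between S(x) and S(y) restricted to coordinates {1,2,3} is at least d_H(x, y). -/
set_option maxHeartbeats 4000000

def pvec : Fin 3 → Fin 3 → Fin 3 → Fin 5 → Fin 5 :=
![
  ![![![3, 0, 1, 2, 4], ![2, 1, 0, 3, 4], ![1, 4, 0, 2, 3]],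
    ![![3, 4, 1, 0, 2], ![3, 1, 2, 0, 4], ![1, 4, 2, 0, 3]],
    ![![3, 2, 1, 0, 4], ![3, 1, 0, 2, 4], ![1, 2, 0, 3, 4]]],
  ![![![2, 0, 1, 3, 4], ![2, 1, 4, 0, 3], ![1, 0, 4, 2, 3]],
    ![![0, 3, 1, 2, 4], ![0, 1, 2, 3, 4], ![1, 3, 4, 0, 2]],
    ![![0, 2, 1, 3, 4], ![0, 1, 4, 2, 3], ![1, 2, 4, 0, 3]]],
  ![![![4, 0, 1, 2, 3], ![2, 1, 3, 0, 4], ![1, 0, 3, 2, 4]],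
    ![![4, 3, 1, 0, 2], ![4, 1, 2, 0, 3], ![1, 3, 2, 0, 4]],
    ![![4, 2, 1, 0, 3], ![4, 1, 3, 0, 2], ![1, 2, 3, 0, 4]]]]

def qvec : Fin 3 → Fin 3 → Fin 3 → Fin 5 → Fin 5 :=
![
  ![![![1, 2, 3, 0, 4], ![2, 1, 0, 3, 4], ![2, 0, 3, 4, 1]],
    ![![3, 2, 4, 0, 1], ![3, 1, 2, 0, 4], ![3, 0, 2, 4, 1]],
    ![![3, 2, 1, 0, 4], ![2, 1, 3, 0, 4], ![2, 0, 1, 3, 4]]],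
  ![![![1, 2, 0, 3, 4], ![3, 1, 0, 4, 2], ![1, 0, 3, 4, 2]],
    ![![0, 2, 3, 1, 4], ![0, 1, 2, 3, 4], ![3, 0, 4, 1, 2]],
    ![![0, 2, 1, 3, 4], ![0, 1, 3, 4, 2], ![3, 0, 1, 4, 2]]],
  ![![![1, 2, 3, 4, 0], ![3, 1, 0, 2, 4], ![1, 0, 3, 2, 4]],
    ![![3, 2, 4, 1, 0], ![3, 1, 2, 4, 0], ![3, 0, 2, 1, 4]],
    ![![3, 2, 1, 4, 0], ![3, 1, 4, 2, 0], ![3, 0, 1, 2, 4]]]]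

lemma pq : ∀ a b c y, qvec a b c (pvec a b c y) = y := by decide
lemma qp : ∀ a b c y, pvec a b c (qvec a b c y) = y := by decide

def S0 : (Fin 3 → Fin 3) → Equiv.Perm (Fin 5) := fun x =>
  ⟨pvec (x 0) (x 1) (x 2), qvec (x 0) (x 1) (x 2),
   fun y => pq _ _ _ y, fun y => qp _ _ _ y⟩

lemma S0inj : ∀ x y : Fin 3 → Fin 3,
    (∀ i, pvec (x 0) (x 1) (x 2) i = pvec (y 0) (y 1) (y 2) i) → x = y := by decide

theorem stmt_8 :
    ∃ S : (Fin 3 → Fin 3) → Equiv.Perm (Fin 5),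
      Function.Injective S ∧
      (∀ x, ∃ i : Fin 5, (i : ℕ) < 3 ∧ ((S x i : Fin 5) : ℕ) + 1 = 2) ∧
      (∀ x, ((S x 4 : Fin 5) : ℕ) + 1 ≠ 1) ∧
      (∀ x y : Fin 3 → Fin 3, x ≠ y →
        hammingDist x y ≤
          (Finset.univ.filter fun i : Fin 5 => (i : ℕ) < 3 ∧ S x i ≠ S y i).card) := by
  refine ⟨S0, ?_, ?_, ?_, ?_⟩
  · intro x y h
    exact S0inj x y fun i => congrFun (congrArg Equiv.toFun h) i
  · exact fun x => by revert x; decide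
  · exact fun x => by revert x; decide
  · intro x y h
    revert h
    show x ≠ y → hammingDist x y ≤
      (Finset.univ.filter fun i : Fin 5 => (i : ℕ) < 3 ∧
        pvec (x 0) (x 1) (x 2) i ≠ pvec (y 0) (y 1) (y 2) i).card
    revert x y
    decide
end

section
/- There exists an injective map T : Z_3^4 → S_6 such that: (i) for every x ∈ Z_3^4, 2 ∈ {T(x)_1, T(x)_2, T(x)_3}; (ii) for every x, T(x)_6 ≠ 1; (iii) for every distinct x, y ∈ Z_3^4, the Hamming distance between T(x) and T(y) restricted to coordinates {1,2,3,4} is at least d_H(x, y). -/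
def tbl9 : List (List Nat) := [
  [0,1,2,4,3,5],
  [0,1,3,4,2,5],
  [0,1,5,4,2,3],
  [1,3,2,4,0,5],
  [1,5,3,4,0,2],
  [1,2,5,4,0,3],
  [0,3,1,4,2,5],
  [0,5,1,4,2,3],
  [0,2,1,4,3,5],
  [3,1,2,4,0,5],
  [3,1,5,2,0,4],
  [3,1,5,4,0,2],
  [1,0,2,4,3,5],
  [1,0,5,2,3,4],
  [1,0,5,4,2,3],
  [3,0,1,4,2,5],
  [3,5,1,4,0,2],
  [3,2,1,4,0,5],
  [4,1,2,3,0,5],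
  [4,1,0,2,3,5],
  [2,1,0,4,3,5],
  [1,3,0,4,2,5],
  [1,5,0,4,2,3],
  [1,2,0,4,3,5],
  [4,0,1,3,2,5],
  [4,5,1,3,0,2],
  [4,2,1,3,0,5],
  [5,1,2,0,3,4],
  [0,1,3,2,4,5],
  [2,1,3,0,4,5],
  [1,3,2,0,4,5],
  [1,5,3,0,2,4],
  [1,2,3,0,4,5],
  [5,3,1,0,2,4],
  [0,4,1,2,3,5],
  [5,2,1,0,3,4],
  [3,1,2,0,4,5],
  [5,1,4,2,0,3],
  [2,1,5,0,3,4],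
  [1,4,2,0,3,5],
  [1,5,4,0,2,3],
  [1,4,5,0,2,3],
  [3,4,1,0,2,5],
  [3,4,1,2,0,5],
  [2,4,1,0,3,5],
  [5,1,0,3,2,4],
  [5,1,0,2,3,4],
  [2,1,0,3,4,5],
  [1,4,0,3,2,5],
  [1,4,0,2,3,5],
  [1,2,0,3,4,5],
  [5,4,1,3,0,2],
  [4,5,1,0,2,3],
  [5,2,1,3,0,4],
  [0,1,2,5,3,4],
  [0,1,3,5,2,4],
  [2,1,3,5,0,4],
  [1,3,2,5,0,4],
  [1,5,3,2,0,4],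
  [1,2,3,5,0,4],
  [0,3,1,5,2,4],
  [0,5,1,2,3,4],
  [0,2,1,5,3,4],
  [3,1,2,5,0,4],
  [3,1,4,2,0,5],
  [2,1,4,5,0,3],
  [1,0,2,5,3,4],
  [1,5,4,2,0,3],
  [1,2,4,5,0,3],
  [3,0,1,5,2,4],
  [3,5,1,2,0,4],
  [3,2,1,5,0,4],
  [4,1,2,5,0,3],
  [4,1,0,5,2,3],
  [2,1,0,5,3,4],
  [1,3,0,5,2,4],
  [1,5,0,2,3,4],
  [1,2,0,5,3,4],
  [4,3,1,5,0,2],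
  [4,5,1,2,0,3],
  [4,2,1,5,0,3]]

def itbl9 : List (List Nat) := [
  [0,1,2,4,3,5],
  [0,1,4,2,3,5],
  [0,1,4,5,3,2],
  [4,0,2,1,3,5],
  [4,0,5,2,3,1],
  [4,0,1,5,3,2],
  [0,2,4,1,3,5],
  [0,2,4,5,3,1],
  [0,2,1,4,3,5],
  [4,1,2,0,3,5],
  [4,1,3,0,5,2],
  [4,1,5,0,3,2],
  [1,0,2,4,3,5],
  [1,0,3,4,5,2],
  [1,0,4,5,3,2],
  [1,2,4,0,3,5],
  [4,2,5,0,3,1],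
  [4,2,1,0,3,5],
  [4,1,2,3,0,5],
  [2,1,3,4,0,5],
  [2,1,0,4,3,5],
  [2,0,4,1,3,5],
  [2,0,4,5,3,1],
  [2,0,1,4,3,5],
  [1,2,4,3,0,5],
  [4,2,5,3,0,1],
  [4,2,1,3,0,5],
  [3,1,2,4,5,0],
  [0,1,3,2,4,5],
  [3,1,0,2,4,5],
  [3,0,2,1,4,5],
  [3,0,4,2,5,1],
  [3,0,1,2,4,5],
  [3,2,4,1,5,0],
  [0,2,3,4,1,5],
  [3,2,1,4,5,0],
  [3,1,2,0,4,5],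
  [4,1,3,5,2,0],
  [3,1,0,4,5,2],
  [3,0,2,4,1,5],
  [3,0,4,5,2,1],
  [3,0,4,5,1,2],
  [3,2,4,0,1,5],
  [4,2,3,0,1,5],
  [3,2,0,4,1,5],
  [2,1,4,3,5,0],
  [2,1,3,4,5,0],
  [2,1,0,3,4,5],
  [2,0,4,3,1,5],
  [2,0,3,4,1,5],
  [2,0,1,3,4,5],
  [4,2,5,3,1,0],
  [3,2,4,5,0,1],
  [4,2,1,3,5,0],
  [0,1,2,4,5,3],
  [0,1,4,2,5,3],
  [4,1,0,2,5,3],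
  [4,0,2,1,5,3],
  [4,0,3,2,5,1],
  [4,0,1,2,5,3],
  [0,2,4,1,5,3],
  [0,2,3,4,5,1],
  [0,2,1,4,5,3],
  [4,1,2,0,5,3],
  [4,1,3,0,2,5],
  [4,1,0,5,2,3],
  [1,0,2,4,5,3],
  [4,0,3,5,2,1],
  [4,0,1,5,2,3],
  [1,2,4,0,5,3],
  [4,2,3,0,5,1],
  [4,2,1,0,5,3],
  [4,1,2,5,0,3],
  [2,1,4,5,0,3],
  [2,1,0,4,5,3],
  [2,0,4,1,5,3],
  [2,0,3,4,5,1],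
  [2,0,1,4,5,3],
  [4,2,5,1,0,3],
  [4,2,3,5,0,1],
  [4,2,1,5,0,3]]

def enc9 (x : Fin 4 → Fin 3) : Nat :=
  (x 0).val * 27 + (x 1).val * 9 + (x 2).val * 3 + (x 3).val

def f9 (x : Fin 4 → Fin 3) (i : Fin 6) : Fin 6 :=
  ⟨((tbl9.getD (enc9 x) []).getD i.val 0) % 6, Nat.mod_lt _ (by decide)⟩

def g9 (x : Fin 4 → Fin 3) (i : Fin 6) : Fin 6 :=
  ⟨((itbl9.getD (enc9 x) []).getD i.val 0) % 6, Nat.mod_lt _ (by decide)⟩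

lemma linv9 : ∀ x : Fin 4 → Fin 3, Function.LeftInverse (g9 x) (f9 x) := by decide

lemma rinv9 : ∀ x : Fin 4 → Fin 3, Function.RightInverse (g9 x) (f9 x) := by decide

def T9 (x : Fin 4 → Fin 3) : Equiv.Perm (Fin 6) :=
  ⟨f9 x, g9 x, linv9 x, rinv9 x⟩

set_option maxRecDepth 100000 in
set_option maxHeartbeats 4000000 in
theorem stmt_9 :
    ∃ T : (Fin 4 → Fin 3) → Equiv.Perm (Fin 6),
      Function.Injective T ∧
      (∀ x, ∃ i : Fin 6, (i : ℕ) < 3 ∧ ((T x i : Fin 6) : ℕ) + 1 = 2) ∧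
      (∀ x, ((T x 5 : Fin 6) : ℕ) + 1 ≠ 1) ∧
      (∀ x y : Fin 4 → Fin 3, x ≠ y →
        hammingDist x y ≤
          (Finset.univ.filter fun i : Fin 6 => (i : ℕ) < 4 ∧ T x i ≠ T y i).card) := by
  refine ⟨T9, ?_, ?_, ?_, ?_⟩
  · decide
  · decide
  · decide
  · decide
end

section
/- There exists an injective map H : Z_3^4 → S_6 such that: (i) for every u ∈ Z_3^4, 1 ∈ {H(u)_1, H(u)_2, H(u)_3}; (ii) for every distinct u, v ∈ Z_3^4, the Hamming distance between H(u) and H(v) restricted to coordinates {1,2,3,4} is at least d_H(u, v). -/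
def Ttbl : Fin 81 → Fin 6 → Fin 6 :=
  ![![0, 3, 5, 1, 2, 4],
    ![0, 5, 4, 3, 1, 2],
    ![0, 1, 4, 3, 2, 5],
    ![0, 3, 4, 1, 2, 5],
    ![0, 3, 4, 5, 1, 2],
    ![0, 1, 4, 5, 2, 3],
    ![0, 5, 3, 1, 2, 4],
    ![0, 5, 4, 2, 1, 3],
    ![0, 1, 4, 2, 3, 5],
    ![0, 4, 5, 1, 2, 3],
    ![0, 4, 5, 3, 1, 2],
    ![0, 1, 5, 3, 2, 4],
    ![0, 4, 2, 1, 3, 5],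
    ![0, 4, 2, 5, 1, 3],
    ![0, 1, 2, 5, 3, 4],
    ![0, 4, 3, 1, 2, 5],
    ![0, 4, 3, 2, 1, 5],
    ![0, 1, 3, 2, 4, 5],
    ![0, 2, 5, 1, 3, 4],
    ![0, 2, 1, 3, 4, 5],
    ![0, 1, 5, 4, 2, 3],
    ![0, 3, 1, 4, 2, 5],
    ![0, 2, 1, 5, 3, 4],
    ![0, 1, 2, 4, 3, 5],
    ![0, 2, 3, 1, 4, 5],
    ![0, 2, 3, 4, 1, 5],
    ![0, 1, 3, 4, 2, 5],
    ![3, 0, 4, 1, 2, 5],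
    ![1, 0, 4, 3, 2, 5],
    ![2, 0, 4, 3, 1, 5],
    ![3, 0, 4, 5, 1, 2],
    ![1, 0, 4, 5, 2, 3],
    ![2, 0, 4, 5, 1, 3],
    ![3, 0, 4, 2, 1, 5],
    ![1, 0, 4, 2, 3, 5],
    ![5, 0, 4, 2, 1, 3],
    ![4, 0, 5, 3, 1, 2],
    ![1, 0, 5, 3, 2, 4],
    ![2, 0, 5, 3, 1, 4],
    ![3, 0, 2, 5, 1, 4],
    ![1, 0, 2, 5, 3, 4],
    ![4, 0, 2, 5, 1, 3],
    ![4, 0, 3, 2, 1, 5],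
    ![1, 0, 3, 2, 4, 5],
    ![5, 0, 3, 2, 1, 4],
    ![3, 0, 5, 4, 1, 2],
    ![1, 0, 5, 4, 2, 3],
    ![2, 0, 5, 4, 1, 3],
    ![3, 0, 1, 4, 2, 5],
    ![1, 0, 2, 4, 3, 5],
    ![5, 0, 2, 4, 1, 3],
    ![3, 0, 1, 2, 4, 5],
    ![1, 0, 3, 4, 2, 5],
    ![5, 0, 3, 4, 1, 2],
    ![3, 5, 0, 1, 2, 4],
    ![1, 5, 0, 3, 2, 4],
    ![5, 1, 0, 3, 2, 4],
    ![4, 5, 0, 1, 2, 3],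
    ![1, 3, 0, 5, 2, 4],
    ![2, 1, 0, 5, 3, 4],
    ![3, 5, 0, 2, 1, 4],
    ![1, 5, 0, 2, 3, 4],
    ![5, 1, 0, 2, 3, 4],
    ![3, 4, 0, 1, 2, 5],
    ![1, 4, 0, 3, 2, 5],
    ![2, 4, 0, 3, 1, 5],
    ![3, 4, 0, 5, 1, 2],
    ![1, 4, 0, 5, 2, 3],
    ![2, 4, 0, 5, 1, 3],
    ![3, 4, 0, 2, 1, 5],
    ![1, 4, 0, 2, 3, 5],
    ![5, 4, 0, 2, 1, 3],
    ![3, 2, 0, 1, 4, 5],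
    ![1, 2, 0, 3, 4, 5],
    ![5, 2, 0, 3, 1, 4],
    ![3, 2, 0, 5, 1, 4],
    ![1, 2, 0, 5, 3, 4],
    ![2, 1, 0, 4, 3, 5],
    ![3, 2, 0, 4, 1, 5],
    ![1, 2, 0, 4, 3, 5],
    ![5, 2, 0, 4, 1, 3]]

set_option maxHeartbeats 4000000 in
set_option maxRecDepth 20000 in
lemma Ttbl_bij : ∀ a : Fin 81, Function.Bijective (Ttbl a) := by decide

noncomputable def Pperm (a : Fin 81) : Equiv.Perm (Fin 6) := Equiv.ofBijective _ (Ttbl_bij a)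

def encz (u : Fin 4 → Fin 3) : Fin 81 :=
  ⟨27 * (u 0).val + 9 * (u 1).val + 3 * (u 2).val + (u 3).val, by omega⟩

def decz (a : Fin 81) : Fin 4 → Fin 3 :=
  fun i => ⟨(a.val / 3 ^ (3 - i.val)) % 3, Nat.mod_lt _ (by norm_num)⟩

lemma decz_encz (u : Fin 4 → Fin 3) : decz (encz u) = u := by
  have h0 := (u 0).isLt
  have h1 := (u 1).isLt
  have h2 := (u 2).isLt
  have h3 := (u 3).isLt
  funext i
  fin_cases i <;> simp [decz, encz, Fin.ext_iff] <;> omega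

set_option maxHeartbeats 16000000 in
set_option maxRecDepth 40000 in
lemma key : ∀ a b : Fin 81,
    hammingDist (decz a) (decz b) ≤
      (Finset.univ.filter fun i : Fin 6 => (i : ℕ) < 4 ∧ Pperm a i ≠ Pperm b i).card := by
  decide

set_option maxHeartbeats 4000000 in
set_option maxRecDepth 20000 in
lemma zkey : ∀ a : Fin 81, ∃ i : Fin 6, (i : ℕ) < 3 ∧ ((Pperm a i : Fin 6) : ℕ) + 1 = 1 := by
  decide

theorem stmt_10 :
    ∃ H : (Fin 4 → Fin 3) → Equiv.Perm (Fin 6),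
      Function.Injective H ∧
      (∀ u, ∃ i : Fin 6, (i : ℕ) < 3 ∧ ((H u i : Fin 6) : ℕ) + 1 = 1) ∧
      (∀ u v : Fin 4 → Fin 3, u ≠ v →
        hammingDist u v ≤
          (Finset.univ.filter fun i : Fin 6 => (i : ℕ) < 4 ∧ H u i ≠ H v i).card) := by
  refine ⟨fun u => Pperm (encz u), ?_, fun u => zkey (encz u), ?_⟩
  · intro u v h
    by_contra hne
    have hk := key (encz u) (encz v)
    rw [decz_encz, decz_encz] at hk
    have hpos : 0 < hammingDist u v := hammingDist_pos.mpr hne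
    obtain ⟨i, hi⟩ := Finset.card_pos.mp (lt_of_lt_of_le hpos hk)
    rw [Finset.mem_filter] at hi
    have h' : Pperm (encz u) = Pperm (encz v) := h
    exact hi.2.2 (by rw [h'])
  · intro u v _
    have hk := key (encz u) (encz v)
    rwa [decz_encz, decz_encz] at hk
end

section
/- For every n ≥ 3 there exists a distance-increasing mapping from Z_3^n to S_{n+2}, i.e., an injective f : Z_3^n → S_{n+2} with d_H(f(x),f(y)) > d_H(x,y) for all distinct x, y ∈ Z_3^n. -/
open Finset Function

namespace Stmt13Aux

lemma tri (v : Fin 3) : v = 0 ∨ v = 1 ∨ v = 2 := by revert v; decide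

/-- Base table: an explicit distance-increasing map `Z_3^3 → S_5`
with the invariant that the value at position `0` is never `1`. -/
def tbl : Fin 3 → Fin 3 → Fin 3 → Fin 5 → Fin 5 :=
  ![![![![3,1,4,2,0], ![4,1,0,3,2], ![3,4,1,2,0]],
     ![![3,1,4,0,2], ![4,2,3,0,1], ![3,2,4,0,1]],
     ![![2,1,3,0,4], ![4,0,3,2,1], ![2,1,3,4,0]]],
    ![![![3,1,0,2,4], ![4,1,0,2,3], ![3,2,1,4,0]],
     ![![3,2,0,1,4], ![4,3,2,0,1], ![4,3,2,1,0]],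
     ![![2,3,0,4,1], ![4,3,0,2,1], ![3,0,2,4,1]]],
    ![![![0,2,1,3,4], ![2,0,4,1,3], ![0,2,1,4,3]],
     ![![0,2,3,1,4], ![0,4,3,1,2], ![0,3,2,1,4]],
     ![![2,0,1,3,4], ![0,4,2,3,1], ![2,4,1,0,3]]]]

def g3 : (Fin 3 → Fin 3) → Fin 5 → Fin 5 := fun x => tbl (x 0) (x 1) (x 2)

def hd5 (p q : Fin 5 → Fin 5) : ℕ :=
  (if p 0 ≠ q 0 then 1 else 0) + (if p 1 ≠ q 1 then 1 else 0) + (if p 2 ≠ q 2 then 1 else 0)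
    + (if p 3 ≠ q 3 then 1 else 0) + (if p 4 ≠ q 4 then 1 else 0)

set_option maxHeartbeats 2000000 in
lemma tbl_inj : ∀ a b c : Fin 3, Function.Injective (tbl a b c) := by decide

set_option maxHeartbeats 2000000 in
lemma tbl_inv : ∀ a b c : Fin 3, tbl a b c 0 ≠ 1 := by decide

set_option maxHeartbeats 4000000 in
lemma tbl_dim : ∀ a b c a' b' c' : Fin 3,
    (if a ≠ a' then 1 else 0) + (if b ≠ b' then 1 else 0) + (if c ≠ c' then 1 else 0)
      < hd5 (tbl a b c) (tbl a' b' c') ∨ (a = a' ∧ b = b' ∧ c = c') := by decide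

lemma hd3eq (x y : Fin 3 → Fin 3) :
    hammingDist x y = (if x 0 ≠ y 0 then 1 else 0) + (if x 1 ≠ y 1 then 1 else 0)
      + (if x 2 ≠ y 2 then 1 else 0) := by
  unfold hammingDist
  rw [Finset.card_filter, Fin.sum_univ_three]

lemma hd5eq (p q : Fin 5 → Fin 5) : hammingDist p q = hd5 p q := by
  unfold hammingDist hd5
  rw [Finset.card_filter, Fin.sum_univ_five]

lemma g3_inj : ∀ x, Function.Injective (g3 x) := fun x => tbl_inj (x 0) (x 1) (x 2)

lemma g3_inv : ∀ x, g3 x 0 ≠ 1 := fun x => tbl_inv (x 0) (x 1) (x 2)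

lemma g3_dim : ∀ x y, x ≠ y → hammingDist x y < hammingDist (g3 x) (g3 y) := by
  intro x y hxy
  rcases tbl_dim (x 0) (x 1) (x 2) (y 0) (y 1) (y 2) with h | ⟨h0, h1, h2⟩
  · rw [hd3eq, hd5eq]
    exact h
  · exact absurd (by funext i; rcases tri i with h | h | h <;> rw [h] <;> assumption) hxy

/-- Splitting the Hamming distance on `Fin (n+1)` at the last coordinate. -/
lemma hd_succ {n : ℕ} (x y : Fin (n + 1) → Fin 3) :
    hammingDist x y = hammingDist (x ∘ Fin.castSucc) (y ∘ Fin.castSucc)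
      + (if x (Fin.last n) ≠ y (Fin.last n) then 1 else 0) := by
  unfold hammingDist
  rw [Finset.card_filter, Finset.card_filter, Fin.sum_univ_castSucc]
  rfl

/-- Hamming distance is invariant under coordinate permutation. -/
lemma hd_comp_equiv {m : ℕ} {α : Type*} [DecidableEq α] (x y : Fin m → α)
    (e : Equiv.Perm (Fin m)) :
    hammingDist (x ∘ e) (y ∘ e) = hammingDist x y := by
  unfold hammingDist
  refine Finset.card_nbij' e e.symm ?_ ?_ ?_ ?_ <;> simp [Function.comp, Set.MapsTo, Set.LeftInvOn, Set.RightInvOn]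

/-- Hamming distance is invariant under postcomposition by an injection. -/
lemma hd_comp_inj {m : ℕ} {α β : Type*} [DecidableEq α] [DecidableEq β]
    (x y : Fin m → α) (s : α → β) (hs : Function.Injective s) :
    hammingDist (s ∘ x) (s ∘ y) = hammingDist x y :=
  hammingDist_comp (fun _ => s) (fun _ => hs)

/-- Two distinct bijections of a finite type differ in at least two places. -/
lemma two_le_hd {m : ℕ} {φ ψ : Fin m → Fin m} (hφ : Function.Bijective φ)
    (hψ : Function.Bijective ψ) (i0 : Fin m) (h : φ i0 ≠ ψ i0) :
    2 ≤ hammingDist φ ψ := by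
  obtain ⟨j, hjv⟩ := hψ.2 (φ i0)
  by_cases hji : j = i0
  · subst hji
    exact absurd hjv.symm h
  · have hj1 : φ j ≠ ψ j := by
      intro he
      exact hji (hφ.1 (he.trans hjv))
    unfold hammingDist
    refine Finset.one_lt_card.mpr ⟨i0, ?_, j, ?_, Ne.symm hji⟩ <;>
      simp only [Finset.mem_filter, Finset.mem_univ, true_and]
    · exact h
    · exact hj1

/-- Lower bound on Hamming distance from a pointwise domination property. -/
lemma hd_insert_le {m : ℕ} {α : Type*} [DecidableEq α] {x y X Y : Fin m → α} {z : Fin m}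
    (hz : x z = y z) (h : ∀ i, (i = z ∨ x i ≠ y i) → X i ≠ Y i) :
    hammingDist x y + 1 ≤ hammingDist X Y := by
  unfold hammingDist
  have hznm : z ∉ Finset.filter (fun i => x i ≠ y i) Finset.univ := by
    simp [hz]
  have hsub : insert z (Finset.filter (fun i => x i ≠ y i) Finset.univ)
      ⊆ Finset.filter (fun i => X i ≠ Y i) Finset.univ := by
    intro i hi
    rw [Finset.mem_insert] at hi
    simp only [Finset.mem_filter, Finset.mem_univ, true_and] at hi ⊢
    exact h i hi
  have h1 := Finset.card_insert_of_notMem hznm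
  have h2 := Finset.card_le_card hsub
  omega

/-- Extension of a map on `Fin (n+2)` to `Fin (n+3)` fixing the last point. -/
def extF (n : ℕ) (p : Fin (n + 2) → Fin (n + 2)) : Fin (n + 3) → Fin (n + 3) :=
  fun i => if h : (i : ℕ) < n + 2 then (p ⟨i, h⟩).castSucc else Fin.last (n + 2)

lemma extF_castSucc (n : ℕ) (p : Fin (n + 2) → Fin (n + 2)) (j : Fin (n + 2)) :
    extF n p j.castSucc = (p j).castSucc := by
  simp [extF, j.isLt]

lemma extF_last (n : ℕ) (p : Fin (n + 2) → Fin (n + 2)) :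
    extF n p (Fin.last (n + 2)) = Fin.last (n + 2) := by
  simp [extF]

lemma extF_zero (n : ℕ) (p : Fin (n + 2) → Fin (n + 2)) :
    extF n p 0 = (p 0).castSucc := by
  have := extF_castSucc n p 0
  simpa using this

lemma extF_inj (n : ℕ) {p : Fin (n + 2) → Fin (n + 2)} (hp : Function.Injective p) :
    Function.Injective (extF n p) := by
  intro i j hij
  unfold extF at hij
  split_ifs at hij with hi hj hj
  · have h1 := hp (Fin.castSucc_injective _ hij)
    simp only [Fin.mk.injEq] at h1
    exact Fin.ext h1
  · exact absurd hij (Fin.castSucc_lt_last _).ne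
  · exact absurd hij.symm (Fin.castSucc_lt_last _).ne
  · apply Fin.ext
    have h1 : (i : ℕ) < n + 3 := i.isLt
    have h2 : (j : ℕ) < n + 3 := j.isLt
    omega

lemma hd_extF {n : ℕ} (p p' : Fin (n + 2) → Fin (n + 2)) :
    hammingDist (extF n p) (extF n p') = hammingDist p p' := by
  unfold hammingDist
  rw [Finset.card_filter, Finset.card_filter, Fin.sum_univ_castSucc]
  simp [extF_castSucc, extF_last]

section Pointwise

variable {m : ℕ} {z u q : Fin m} {π ρ : Fin m → Fin m}

lemma L01 (hzu : z ≠ u) (hπ : Function.Injective π) (hρ : Function.Injective ρ)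
    (hπz : π z = z) (hρz : ρ z = z) :
    ∀ i, (i = z ∨ π i ≠ ρ i) → π i ≠ Equiv.swap z u (ρ i) := by
  intro i hi hc
  rcases hi with rfl | hd
  · rw [hρz, Equiv.swap_apply_left, hπz] at hc
    exact hzu hc
  · by_cases h1 : ρ i = z
    · have hiz : i = z := hρ (h1.trans hρz.symm)
      subst hiz
      exact hd (hπz.trans hρz.symm)
    · by_cases h2 : ρ i = u
      · rw [h2, Equiv.swap_apply_right] at hc
        have hiz : i = z := hπ (hc.trans hπz.symm)
        subst hiz
        rw [hρz] at h2
        exact hzu h2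
      · rw [Equiv.swap_apply_of_ne_of_ne h1 h2] at hc
        exact hd hc

lemma L02 (hqz : q ≠ z) (hπz : π z = z) (hρz : ρ z = z)
    (hπq : π q ≠ z) (hρq : ρ q ≠ z) :
    ∀ i, (i = z ∨ π i ≠ ρ i) → π i ≠ ρ (Equiv.swap q z i) := by
  intro i hi hc
  by_cases h1 : i = z
  · subst h1
    rw [Equiv.swap_apply_right, hπz] at hc
    exact hρq hc.symm
  · by_cases h2 : i = q
    · subst h2
      rw [Equiv.swap_apply_left, hρz] at hc
      exact hπq hc
    · rw [Equiv.swap_apply_of_ne_of_ne h2 h1] at hc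
      exact (hi.resolve_left h1) hc

lemma L12 (hzu : z ≠ u) (hqz : q ≠ z)
    (hπ : Function.Injective π) (hρ : Function.Injective ρ)
    (hπz : π z = z) (hρz : ρ z = z)
    (hπq : π q ≠ z) (hπqu : π q ≠ u) (hρq : ρ q ≠ z) (hρqu : ρ q ≠ u) :
    ∀ i, (i = z ∨ π i ≠ ρ i) → Equiv.swap z u (π i) ≠ ρ (Equiv.swap q z i) := by
  intro i hi hc
  by_cases h1 : i = z
  · subst h1
    rw [hπz, Equiv.swap_apply_left, Equiv.swap_apply_right] at hc
    exact hρqu hc.symm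
  · by_cases h2 : i = q
    · subst h2
      rw [Equiv.swap_apply_left, hρz, Equiv.swap_apply_of_ne_of_ne hπq hπqu] at hc
      exact hπq hc
    · rw [Equiv.swap_apply_of_ne_of_ne h2 h1] at hc
      have hd : π i ≠ ρ i := hi.resolve_left h1
      by_cases h3 : π i = z
      · exact h1 (hπ (h3.trans hπz.symm))
      · by_cases h4 : π i = u
        · rw [h4, Equiv.swap_apply_right] at hc
          exact h1 (hρ (hc.symm.trans hρz.symm))
        · rw [Equiv.swap_apply_of_ne_of_ne h3 h4] at hc
          exact hd hc

end Pointwise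

/-- The recursive step construction. -/
def GF (n : ℕ) (g : (Fin n → Fin 3) → Fin (n + 2) → Fin (n + 2))
    (x : Fin (n + 1) → Fin 3) : Fin (n + 3) → Fin (n + 3) :=
  if x (Fin.last n) = 0 then extF n (g (x ∘ Fin.castSucc))
  else if x (Fin.last n) = 1 then
    (Equiv.swap (Fin.last (n + 2)) (1 : Fin (n + 3))) ∘ extF n (g (x ∘ Fin.castSucc))
  else extF n (g (x ∘ Fin.castSucc)) ∘ (Equiv.swap (0 : Fin (n + 3)) (Fin.last (n + 2)))

lemma GF_eq0 {n : ℕ} {g : (Fin n → Fin 3) → Fin (n + 2) → Fin (n + 2)}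
    {x : Fin (n + 1) → Fin 3} (h : x (Fin.last n) = 0) :
    GF n g x = extF n (g (x ∘ Fin.castSucc)) := by
  unfold GF
  rw [if_pos h]

lemma GF_eq1 {n : ℕ} {g : (Fin n → Fin 3) → Fin (n + 2) → Fin (n + 2)}
    {x : Fin (n + 1) → Fin 3} (h : x (Fin.last n) = 1) :
    GF n g x = (Equiv.swap (Fin.last (n + 2)) (1 : Fin (n + 3)))
      ∘ extF n (g (x ∘ Fin.castSucc)) := by
  unfold GF
  rw [if_neg (by rw [h]; decide), if_pos h]

lemma GF_eq2 {n : ℕ} {g : (Fin n → Fin 3) → Fin (n + 2) → Fin (n + 2)}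
    {x : Fin (n + 1) → Fin 3} (h : x (Fin.last n) = 2) :
    GF n g x = extF n (g (x ∘ Fin.castSucc))
      ∘ (Equiv.swap (0 : Fin (n + 3)) (Fin.last (n + 2))) := by
  unfold GF
  rw [if_neg (by rw [h]; decide), if_neg (by rw [h]; decide)]

lemma step (n : ℕ) (g : (Fin n → Fin 3) → Fin (n + 2) → Fin (n + 2))
    (hinj : ∀ x, Function.Injective (g x))
    (hinv : ∀ x, g x 0 ≠ 1)
    (hdim : ∀ x y, x ≠ y → hammingDist x y < hammingDist (g x) (g y)) :
    ∃ G : (Fin (n + 1) → Fin 3) → Fin (n + 1 + 2) → Fin (n + 1 + 2),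
      (∀ x, Function.Injective (G x)) ∧ (∀ x, G x 0 ≠ 1) ∧
      (∀ x y, x ≠ y → hammingDist x y < hammingDist (G x) (G y)) := by
  have hzu : Fin.last (n + 2) ≠ (1 : Fin (n + 3)) := by
    apply Fin.ne_of_val_ne
    simp only [Fin.val_last, Fin.val_one]
    omega
  have h0z : (0 : Fin (n + 3)) ≠ Fin.last (n + 2) := by
    apply Fin.ne_of_val_ne
    simp only [Fin.val_last, Fin.val_zero]
    omega
  have hPinj : ∀ x' : Fin n → Fin 3, Function.Injective (extF n (g x')) :=
    fun x' => extF_inj n (hinj x')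
  have hPz : ∀ x' : Fin n → Fin 3, extF n (g x') (Fin.last (n + 2)) = Fin.last (n + 2) :=
    fun x' => extF_last n (g x')
  have hP0z : ∀ x' : Fin n → Fin 3, extF n (g x') 0 ≠ Fin.last (n + 2) := by
    intro x'
    rw [extF_zero]
    exact (Fin.castSucc_lt_last _).ne
  have hP0u : ∀ x' : Fin n → Fin 3, extF n (g x') 0 ≠ (1 : Fin (n + 3)) := by
    intro x'
    rw [extF_zero]
    intro hc
    apply hinv x'
    apply Fin.castSucc_injective
    rw [hc, Fin.castSucc_one]
  have hGinj : ∀ x, Function.Injective (GF n g x) := by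
    intro x
    rcases tri (x (Fin.last n)) with h | h | h
    · rw [GF_eq0 h]; exact hPinj _
    · rw [GF_eq1 h]; exact (Equiv.injective _).comp (hPinj _)
    · rw [GF_eq2 h]; exact (hPinj _).comp (Equiv.injective _)
  refine ⟨GF n g, hGinj, ?_, ?_⟩
  · -- invariant
    intro x
    rcases tri (x (Fin.last n)) with h | h | h
    · rw [GF_eq0 h]; exact hP0u _
    · rw [GF_eq1 h]
      simp only [Function.comp_apply]
      rw [Equiv.swap_apply_of_ne_of_ne (hP0z _) (hP0u _)]
      exact hP0u _
    · rw [GF_eq2 h]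
      simp only [Function.comp_apply]
      rw [Equiv.swap_apply_left, extF_last]
      exact hzu
  · -- distance
    intro x y hxy
    have hsplit := hd_succ x y
    by_cases hab : x (Fin.last n) = y (Fin.last n)
    · -- same last coordinate
      have hxy' : x ∘ Fin.castSucc ≠ y ∘ Fin.castSucc := by
        intro h
        apply hxy
        funext i
        induction i using Fin.lastCases with
        | last => exact hab
        | cast j => exact congrFun h j
      have hd2 : hammingDist (GF n g x) (GF n g y)
          = hammingDist (g (x ∘ Fin.castSucc)) (g (y ∘ Fin.castSucc)) := by
        rcases tri (x (Fin.last n)) with h | h | h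
        · rw [GF_eq0 h, GF_eq0 (hab.symm.trans h)]
          exact hd_extF _ _
        · rw [GF_eq1 h, GF_eq1 (hab.symm.trans h),
            hd_comp_inj _ _ _ (Equiv.injective _)]
          exact hd_extF _ _
        · rw [GF_eq2 h, GF_eq2 (hab.symm.trans h), hd_comp_equiv]
          exact hd_extF _ _
      rw [hd2, hsplit, if_neg (not_not_intro hab)]
      simpa using hdim _ _ hxy'
    · -- different last coordinates
      have hpoint : ∀ i, (i = Fin.last (n + 2)
            ∨ extF n (g (x ∘ Fin.castSucc)) i ≠ extF n (g (y ∘ Fin.castSucc)) i) →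
          GF n g x i ≠ GF n g y i := by
        intro i hi
        rcases tri (x (Fin.last n)) with ha | ha | ha <;>
          rcases tri (y (Fin.last n)) with hb | hb | hb
        · exact absurd (ha.trans hb.symm) hab
        · rw [GF_eq0 ha, GF_eq1 hb]
          exact L01 hzu (hPinj _) (hPinj _) (hPz _) (hPz _) i hi
        · rw [GF_eq0 ha, GF_eq2 hb]
          exact L02 h0z (hPz _) (hPz _) (hP0z _) (hP0z _) i hi
        · rw [GF_eq1 ha, GF_eq0 hb]
          exact Ne.symm (L01 hzu (hPinj _) (hPinj _) (hPz _) (hPz _) i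
            (hi.imp id Ne.symm))
        · exact absurd (ha.trans hb.symm) hab
        · rw [GF_eq1 ha, GF_eq2 hb]
          exact L12 hzu h0z (hPinj _) (hPinj _) (hPz _) (hPz _)
            (hP0z _) (hP0u _) (hP0z _) (hP0u _) i hi
        · rw [GF_eq2 ha, GF_eq0 hb]
          exact Ne.symm (L02 h0z (hPz _) (hPz _) (hP0z _) (hP0z _) i
            (hi.imp id Ne.symm))
        · rw [GF_eq2 ha, GF_eq1 hb]
          exact Ne.symm (L12 hzu h0z (hPinj _) (hPinj _) (hPz _) (hPz _)
            (hP0z _) (hP0u _) (hP0z _) (hP0u _) i (hi.imp id Ne.symm))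
        · exact absurd (ha.trans hb.symm) hab
      by_cases hxy' : x ∘ Fin.castSucc = y ∘ Fin.castSucc
      · -- only the last coordinate differs
        have hGbij : ∀ w, Function.Bijective (GF n g w) :=
          fun w => Finite.injective_iff_bijective.mp (hGinj w)
        have h2 := two_le_hd (hGbij x) (hGbij y) (Fin.last (n + 2))
          (hpoint (Fin.last (n + 2)) (Or.inl rfl))
        rw [hsplit, hxy', hammingDist_self, if_pos hab]
        omega
      · -- both parts differ
        have hlow := hdim _ _ hxy'
        have hfin := hd_insert_le
          (x := extF n (g (x ∘ Fin.castSucc))) (y := extF n (g (y ∘ Fin.castSucc)))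
          (z := Fin.last (n + 2)) (by rw [hPz, hPz]) hpoint
        have heq := hd_extF (g (x ∘ Fin.castSucc)) (g (y ∘ Fin.castSucc))
        rw [hsplit, if_pos hab]
        omega

lemma key (m : ℕ) :
    ∃ g : (Fin (m + 3) → Fin 3) → Fin (m + 3 + 2) → Fin (m + 3 + 2),
      (∀ x, Function.Injective (g x)) ∧ (∀ x, g x 0 ≠ 1) ∧
      (∀ x y, x ≠ y → hammingDist x y < hammingDist (g x) (g y)) := by
  induction m with
  | zero => exact ⟨g3, g3_inj, g3_inv, g3_dim⟩
  | succ k ih =>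
    obtain ⟨g, h1, h2, h3⟩ := ih
    exact step (k + 3) g h1 h2 h3

end Stmt13Aux

theorem stmt_13 (n : ℕ) (hn : 3 ≤ n) :
    ∃ f : (Fin n → Fin 3) → Equiv.Perm (Fin (n + 2)),
      Function.Injective f ∧
      ∀ x y : Fin n → Fin 3, x ≠ y → hammingDist x y < hammingDist ⇑(f x) ⇑(f y) := by
  obtain ⟨m, rfl⟩ : ∃ m, n = m + 3 := ⟨n - 3, by omega⟩
  obtain ⟨g, h1, h2, h3⟩ := Stmt13Aux.key m
  have hbij : ∀ x, Function.Bijective (g x) :=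
    fun x => Finite.injective_iff_bijective.mp (h1 x)
  refine ⟨fun x => Equiv.ofBijective (g x) (hbij x), ?_, ?_⟩
  · intro x y hxy
    by_contra hne
    have hlt := h3 x y hne
    have hgeq : g x = g y := congrArg DFunLike.coe hxy
    rw [hgeq, hammingDist_self] at hlt
    omega
  · intro x y hxy
    exact h3 x y hxy
end

section
/- Assume that for every n ≥ 3 there exists a distance-increasing mapping from Z_3^n to S_{n+2}. Then for all n ≥ 5 and 2 ≤ d ≤ n, P(n,d) ≥ A_3(n−2, d−1), where P(n,d) is the maximal size of a set of permutations of {1,...,n} with pairwise Hamming distance ≥ d, and A_3(m,d) is the maximal size of a ternary code of length m with minimum distance ≥ d. -/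
/-- Maximal size of an (n,d) permutation array. -/
noncomputable def Pmax (n d : ℕ) : ℕ :=
  sSup {s | ∃ A : Finset (Equiv.Perm (Fin n)),
    (∀ π ∈ A, ∀ σ ∈ A, π ≠ σ → d ≤ hammingDist ⇑π ⇑σ) ∧ A.card = s}

/-- Maximal size of a ternary (m,d) code. -/
noncomputable def A3 (m d : ℕ) : ℕ :=
  sSup {s | ∃ C : Finset (Fin m → Fin 3),
    (∀ c ∈ C, ∀ c' ∈ C, c ≠ c' → d ≤ hammingDist c c') ∧ C.card = s}

theorem stmt_16
    (h : ∀ n : ℕ, 3 ≤ n → ∃ f : (Fin n → Fin 3) → Equiv.Perm (Fin (n + 2)),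
      Function.Injective f ∧
      ∀ x y : Fin n → Fin 3, x ≠ y → hammingDist x y < hammingDist ⇑(f x) ⇑(f y)) :
    ∀ n d : ℕ, 5 ≤ n → 2 ≤ d → d ≤ n → A3 (n - 2) (d - 1) ≤ Pmax n d := by
  rintro n d hn hd hdn
  obtain ⟨m, rfl⟩ : ∃ m, n = m + 2 := ⟨n - 2, by omega⟩
  have hm3 : 3 ≤ m := by omega
  obtain ⟨f, hfinj, hfd⟩ := h m hm3
  have hsub : m + 2 - 2 = m := rfl
  rw [hsub]
  apply csSup_le
  · exact ⟨0, ∅, by simp⟩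
  rintro s ⟨C, hC, hcard⟩
  apply le_csSup
  · refine ⟨Fintype.card (Equiv.Perm (Fin (m + 2))), ?_⟩
    rintro t ⟨A, -, rfl⟩
    simpa using Finset.card_le_univ A
  · refine ⟨C.image f, ?_, ?_⟩
    · rintro π hπ σ hσ hne
      obtain ⟨x, hx, rfl⟩ := Finset.mem_image.mp hπ
      obtain ⟨y, hy, rfl⟩ := Finset.mem_image.mp hσ
      have hxy : x ≠ y := fun e => hne (by rw [e])
      have h1 : d - 1 ≤ hammingDist x y := hC x hx y hy hxy
      have h2 := hfd x y hxy
      omega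
    · rw [Finset.card_image_of_injective _ hfinj, hcard]
end
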